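/- Let R be a commutative Noetherian ring and let A = R[X₁, X₂, X₃, …] be the polynomial ring over R in countably infinitely many variables. If a prime ideal 𝔭 of A is generated by n elements, then the height of 𝔭 is at most n. Equivalently, in any chain of prime ideals 𝔭 = 𝔭₀ ⊇ 𝔭₁ ⊇ ⋯ ⊇ 𝔭ₙ₊₁ of A, two consecutive primes must coincide. -/

import Mathlib

open Ideal

universe u

lemma isArtinian_of_surjective_algebra {S K M : Type*} [CommRing S] [CommRing K] [Algebra S K]
    (hsurj : Function.Surjective (algebraMap S K)) [AddCommGroup M] [Module S M] [Module K M]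
    [IsScalarTower S K M] (h : IsArtinian K M) : IsArtinian S M := by
  rw [isArtinian_iff] at h ⊢
  refine OrderEmbedding.wellFounded ?_ h
  refine (OrderEmbedding.ofMapLEIff (fun N : Submodule S M =>
    { carrier := N
      add_mem' := fun ha hb => N.add_mem ha hb
      zero_mem' := N.zero_mem
      smul_mem' := by
        intro c x hx
        obtain ⟨s, rfl⟩ := hsurj c
        rw [algebraMap_smul]
        exact N.smul_mem s hx } : Submodule S M → Submodule K M) ?_)
  intro a b
  constructor
  · intro hab y hy
    exact hab hy
  · intro hab y hy
    exact hab hy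

/-- A Noetherian commutative ring with a nilpotent maximal ideal is Artinian. -/
lemma artinian_of_nilpotent_maximal {S : Type*} [CommRing S] [IsNoetherianRing S]
    (m : Ideal S) (hm : m.IsMaximal) (k : ℕ) (hk : m ^ k = ⊥) : IsArtinianRing S := by
  have key : ∀ d : ℕ, IsArtinian S (m ^ (k - d) : Ideal S) := by
    intro d
    induction d with
    | zero =>
      rw [Nat.sub_zero, hk]
      exact isArtinian_of_finite
    | succ d ih =>
      rcases le_or_gt k d with hkd | hkd
      · have : k - (d+1) = k - d := by omega
        rwa [this]
      · set j := k - (d + 1) with hj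
        have hjd : k - d = j + 1 := by omega
        rw [hjd] at ih
        have hle : (m ^ (j+1) : Ideal S) ≤ m ^ j := Ideal.pow_le_pow_right (by omega)
        set P : Submodule S S := (m ^ j : Ideal S) with hP
        set S' : Submodule S P := Submodule.comap P.subtype (m ^ (j+1) : Ideal S) with hS'def
        have hS' : IsArtinian S S' := by
          have e : S' ≃ₗ[S] (m ^ (j+1) : Ideal S) := Submodule.comapSubtypeEquivOfLe hle
          exact isArtinian_of_linearEquiv e.symm
        have htor : Module.IsTorsionBySet S (P ⧸ S') (m : Set S) := by
          rintro x ⟨a, ha⟩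
          obtain ⟨⟨z, hz⟩, rfl⟩ := Submodule.Quotient.mk_surjective S' x
          rw [← Submodule.Quotient.mk_smul, Submodule.Quotient.mk_eq_zero, hS'def,
            Submodule.mem_comap]
          show a • z ∈ (m ^ (j+1) : Ideal S)
          rw [pow_succ, mul_comm, smul_eq_mul]
          exact Ideal.mul_mem_mul ha hz
        letI : Module (S ⧸ m) (P ⧸ S') := htor.module
        haveI : IsScalarTower S (S ⧸ m) (P ⧸ S') := htor.isScalarTower
        haveI : Module.Finite S P := Module.Finite.iff_fg.mpr (IsNoetherian.noetherian _)
        haveI : Module.Finite S (P ⧸ S') :=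
          Module.Finite.of_surjective (S'.mkQ) (Submodule.Quotient.mk_surjective S')
        haveI : Module.Finite (S ⧸ m) (P ⧸ S') :=
          Module.Finite.of_restrictScalars_finite S _ _
        letI : Field (S ⧸ m) := Ideal.Quotient.field m
        haveI hq : IsArtinian (S ⧸ m) (P ⧸ S') := inferInstance
        haveI hq' : IsArtinian S (P ⧸ S') := isArtinian_of_surjective_algebra
          (by rw [Ideal.Quotient.algebraMap_eq]; exact Ideal.Quotient.mk_surjective) hq
        exact (isArtinian_iff_submodule_quotient S').mpr ⟨hS', hq'⟩
  have := key k
  rw [Nat.sub_self, pow_zero, Ideal.one_eq_top] at this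
  exact isArtinian_of_linearEquiv (Submodule.topEquiv (R := S) (M := S))

/-- Local Hauptidealsatz setup: quotient by (x) is Artinian. -/
lemma pit_local {S : Type*} [CommRing S] [IsNoetherianRing S] [IsLocalRing S] (x : S)
    (hmin : IsLocalRing.maximalIdeal S ∈ (Ideal.span {x}).minimalPrimes)
    (p : Ideal S) (hp : p.IsPrime) (hpm : p < IsLocalRing.maximalIdeal S)
    (r : Ideal S) (hr : r.IsPrime) (hrp : r < p) : False := by
  set m := IsLocalRing.maximalIdeal S with hm
  have hxm : Ideal.span {x} ≤ m := hmin.1.2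
  have hxp : x ∉ p := fun hxp =>
    hpm.ne (le_antisymm hpm.le (hmin.2 ⟨hp, by rwa [Ideal.span_le, Set.singleton_subset_iff]⟩
      hpm.le))
  set mk := Ideal.Quotient.mk (Ideal.span {x}) with hmkdef
  have hker : RingHom.ker mk = Ideal.span {x} := Ideal.mk_ker
  have hsurj : Function.Surjective mk := Ideal.Quotient.mk_surjective
  set mb := Ideal.map mk m with hmb
  -- every prime of S/(x) equals the image of m
  have hprimes : ∀ J : Ideal (S ⧸ Ideal.span {x}), J.IsPrime → J = mb := by
    intro J hJ
    have h1 : (Ideal.comap mk J).IsPrime := hJ.comap _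
    have h2 : Ideal.span {x} ≤ Ideal.comap mk J := fun y hy => by
      have : mk y = 0 := Ideal.Quotient.eq_zero_iff_mem.mpr hy
      simp only [Ideal.mem_comap, this]; exact J.zero_mem
    have h3 : Ideal.comap mk J = m :=
      le_antisymm (IsLocalRing.le_maximalIdeal h1.ne_top)
        (hmin.2 ⟨h1, h2⟩ (IsLocalRing.le_maximalIdeal h1.ne_top))
    rw [hmb, ← h3, Ideal.map_comap_of_surjective _ hsurj]
  -- mb is maximal
  haveI : m.IsMaximal := IsLocalRing.maximalIdeal.isMaximal S
  letI : Field (S ⧸ m) := Ideal.Quotient.field m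
  have hmmax : mb.IsMaximal := by
    apply Ideal.Quotient.maximal_of_isField
    have e : ((S ⧸ Ideal.span {x}) ⧸ mb) ≃+* S ⧸ (Ideal.span {x} ⊔ m) :=
      DoubleQuot.quotQuotEquivQuotSup _ _
    have : Ideal.span {x} ⊔ m = m := sup_eq_right.mpr hxm
    rw [this] at e
    exact e.toMulEquiv.isField (Field.toIsField (S ⧸ m))
  -- mb is nilpotent
  obtain ⟨k, hk⟩ : IsNilpotent mb := by
    have hnil : nilradical (S ⧸ Ideal.span {x}) = mb := by
      rw [nilradical_eq_sInf]
      apply le_antisymm (sInf_le hmmax.isPrime)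
      · exact le_sInf fun J hJ => (hprimes J hJ).ge
    rw [← hnil]
    exact IsNoetherianRing.isNilpotent_nilradical _
  have hart : IsArtinianRing (S ⧸ Ideal.span {x}) :=
    artinian_of_nilpotent_maximal mb hmmax k hk
  -- symbolic powers of p
  set Lp := Localization.AtPrime p with hLp
  set f := algebraMap S Lp with hf
  haveI : IsNoetherianRing Lp := IsLocalization.isNoetherianRing p.primeCompl _ inferInstance
  set P : ℕ → Ideal S := fun n => Ideal.comap f (Ideal.map f (p ^ n)) with hPdef
  have hPanti : ∀ a b, a ≤ b → P b ≤ P a := fun a b hab =>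
    Ideal.comap_mono (Ideal.map_mono (Ideal.pow_le_pow_right hab))
  -- stabilization modulo (x)
  obtain ⟨n, hn⟩ := IsArtinian.monotone_stabilizes
    (R := S ⧸ Ideal.span {x}) (M := S ⧸ Ideal.span {x})
    ⟨fun nn => OrderDual.toDual (Ideal.map mk (P nn)),
     fun a b hab => Ideal.map_mono (hPanti a b hab)⟩
  have hstab : Ideal.map mk (P n) = Ideal.map mk (P (n + 1)) := hn (n+1) (by omega)
  -- P n ≤ P (n+1) ⊔ span{x} • P n
  have hsub : P n ≤ P (n + 1) ⊔ Ideal.span {x} • P n := by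
    intro y hy
    have : mk y ∈ Ideal.map mk (P (n + 1)) := by
      rw [← hstab]; exact Ideal.mem_map_of_mem mk hy
    obtain ⟨z, hz, hzy⟩ := (Ideal.mem_map_iff_of_surjective mk hsurj).mp this
    have hw : y - z ∈ Ideal.span {x} := by
      rw [← hker]
      simp only [RingHom.mem_ker, map_sub, hzy, sub_self]
    obtain ⟨c, hc⟩ := Ideal.mem_span_singleton'.mp hw
    have hcx : c * x ∈ P n := hc ▸ sub_mem hy (hPanti n (n+1) (by omega) hz)
    have hcP : c ∈ P n := by
      have h1 : f c * f x ∈ Ideal.map f (p ^ n) := by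
        rw [← _root_.map_mul]; exact Ideal.mem_comap.mp hcx
      have hux : IsUnit (f x) := IsLocalization.map_units Lp (⟨x, hxp⟩ : p.primeCompl)
      rw [mul_comm] at h1
      exact Ideal.mem_comap.mpr ((Ideal.unit_mul_mem_iff_mem _ hux).mp h1)
    have : y = z + x • c := by rw [smul_eq_mul, mul_comm, hc]; ring
    rw [this]
    exact Submodule.add_mem_sup hz
      (Submodule.smul_mem_smul (Ideal.mem_span_singleton_self x) hcP)
  -- Nakayama: P n = P (n+1)
  have hPn : P n = P (n + 1) := by
    refine le_antisymm ?_ (hPanti n (n+1) (by omega))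
    refine Submodule.le_of_le_smul_of_le_jacobson_bot (IsNoetherian.noetherian _) ?_ hsub
    rw [IsLocalRing.jacobson_eq_maximalIdeal ⊥ bot_ne_top]
    exact hxm
  -- hence in the localization, map f (p^n) = map f (p^(n+1))
  have hmapn : Ideal.map f (p ^ n) = Ideal.map f (p ^ (n + 1)) := by
    have e1 := IsLocalization.map_comap p.primeCompl Lp (Ideal.map f (p ^ n))
    have e2 := IsLocalization.map_comap p.primeCompl Lp (Ideal.map f (p ^ (n + 1)))
    rw [← e1, ← e2]
    show Ideal.map f (P n) = Ideal.map f (P (n+1))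
    rw [hPn]
  -- Nakayama in Lp: map f (p^n) = ⊥
  have hbot : Ideal.map f (p ^ n) = ⊥ := by
    refine Submodule.eq_bot_of_le_smul_of_le_jacobson_bot (Ideal.map f p) _
      (IsNoetherian.noetherian _) ?_ ?_
    · rw [Ideal.smul_eq_mul]
      calc Ideal.map f (p ^ n) = Ideal.map f (p ^ (n+1)) := hmapn
        _ = Ideal.map f (p ^ n * p) := by rw [pow_succ]
        _ = Ideal.map f (p ^ n) * Ideal.map f p := Ideal.map_mul f _ _
        _ ≤ Ideal.map f p * Ideal.map f (p ^ n) := le_of_eq (mul_comm _ _)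
    · rw [IsLocalRing.jacobson_eq_maximalIdeal ⊥ bot_ne_top,
        Localization.AtPrime.map_eq_maximalIdeal]
  -- contradiction with r < p
  obtain ⟨y, hyp, hyr⟩ := SetLike.exists_of_lt hrp
  have hy0 : f (y ^ n) = 0 := by
    have : f (y ^ n) ∈ Ideal.map f (p ^ n) := Ideal.mem_map_of_mem f (Ideal.pow_mem_pow hyp n)
    rwa [hbot, Ideal.mem_bot] at this
  obtain ⟨u, hu⟩ := (IsLocalization.map_eq_zero_iff p.primeCompl Lp _).mp hy0
  have : (u : S) * y ^ n ∈ r := by rw [hu]; exact r.zero_mem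
  rcases hr.mem_or_mem this with h | h
  · exact u.2 (hrp.le h)
  · exact hyr (hr.mem_of_pow_mem n h)

/-- Krull's principal ideal theorem, chain form: if `q` is a minimal prime over a principal
ideal in a Noetherian ring, there is no chain `a ⊊ b ⊊ q` of primes. -/
lemma pit {B : Type*} [CommRing B] [IsNoetherianRing B] (x : B) (q : Ideal B)
    (hq : q ∈ (Ideal.span {x}).minimalPrimes) (a b : Ideal B) (ha : a.IsPrime)
    (hb : b.IsPrime) (hab : a < b) (hbq : b < q) : False := by
  have hqp : q.IsPrime := hq.1.1
  set L := Localization.AtPrime q with hL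
  set f := algebraMap B L with hf
  haveI : IsNoetherianRing L := IsLocalization.isNoetherianRing q.primeCompl _ inferInstance
  have hda : Disjoint (q.primeCompl : Set B) (a : Set B) := by
    rw [Set.disjoint_iff]
    rintro y ⟨hy1, hy2⟩; exact hy1 (hbq.le (hab.le hy2))
  have hdb : Disjoint (q.primeCompl : Set B) (b : Set B) := by
    rw [Set.disjoint_iff]
    rintro y ⟨hy1, hy2⟩; exact hy1 (hbq.le hy2)
  have hA : (Ideal.map f a).IsPrime := IsLocalization.isPrime_of_isPrime_disjoint q.primeCompl L a ha hda
  have hB : (Ideal.map f b).IsPrime := IsLocalization.isPrime_of_isPrime_disjoint q.primeCompl L b hb hdb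
  have hcomA : Ideal.comap f (Ideal.map f a) = a :=
    IsLocalization.comap_map_of_isPrime_disjoint q.primeCompl L ha hda
  have hcomB : Ideal.comap f (Ideal.map f b) = b :=
    IsLocalization.comap_map_of_isPrime_disjoint q.primeCompl L hb hdb
  have hAB : Ideal.map f a < Ideal.map f b := by
    refine lt_of_le_of_ne (Ideal.map_mono hab.le) fun h => hab.ne ?_
    rw [← hcomA, ← hcomB, h]
  have hqmax : Ideal.map f q = IsLocalRing.maximalIdeal L :=
    Localization.AtPrime.map_eq_maximalIdeal (hI := hqp)
  have hcomm : Ideal.comap f (IsLocalRing.maximalIdeal L) = q :=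
    Localization.AtPrime.comap_maximalIdeal (hI := hqp)
  have hBM : Ideal.map f b < IsLocalRing.maximalIdeal L := by
    refine lt_of_le_of_ne (le_trans (Ideal.map_mono hbq.le) hqmax.le) fun h => hbq.ne ?_
    rw [← hcomB, h, hcomm]
  -- maximal ideal of L is minimal over (f x)
  have hmin : IsLocalRing.maximalIdeal L ∈ (Ideal.span {f x}).minimalPrimes := by
    constructor
    · refine ⟨IsLocalRing.maximalIdeal.isMaximal L |>.isPrime, ?_⟩
      rw [Ideal.span_le, Set.singleton_subset_iff, ← hqmax]
      exact Ideal.mem_map_of_mem f (hq.1.2 (Ideal.mem_span_singleton_self x))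
    · rintro J ⟨hJ, hJx⟩ hJle
      have h1 : (Ideal.comap f J).IsPrime := hJ.comap f
      have h2 : Ideal.span {x} ≤ Ideal.comap f J := by
        rw [Ideal.span_le, Set.singleton_subset_iff]
        show x ∈ Ideal.comap f J
        rw [Ideal.mem_comap]
        exact hJx (Ideal.mem_span_singleton_self (f x))
      have h3 : Ideal.comap f J ≤ q := by
        calc Ideal.comap f J ≤ Ideal.comap f (IsLocalRing.maximalIdeal L) := Ideal.comap_mono hJle
          _ = q := hcomm
      have h4 : q ≤ Ideal.comap f J := hq.2 ⟨h1, h2⟩ h3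
      have h5 : Ideal.comap f J = q := le_antisymm h3 h4
      have : Ideal.map f (Ideal.comap f J) = J := IsLocalization.map_comap q.primeCompl L J
      rw [← this, h5, hqmax]
  exact pit_local (f x) hmin (Ideal.map f b) hB hBM (Ideal.map f a) hA hAB

/-- Chain modification: given a chain of primes with `x ∈ c (j+1)`, we can modify the chain
(keeping indices `≥ j+1` fixed) so that `x` belongs to the prime at index 1. -/
lemma chain_modify {B : Type*} [CommRing B] [IsNoetherianRing B] (h : ℕ) (x : B) :
    ∀ (j : ℕ) (c : ℕ → Ideal B), (∀ i ≤ h, (c i).IsPrime) → (∀ i, i < h → c i < c (i+1)) →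
    j + 1 ≤ h → x ∈ c (j + 1) →
    ∃ c' : ℕ → Ideal B, (∀ i ≤ h, (c' i).IsPrime) ∧ (∀ i, i < h → c' i < c' (i+1)) ∧
      (∀ i, j + 1 ≤ i → c' i = c i) ∧ x ∈ c' 1 := by
  intro j
  induction j with
  | zero =>
    intro c hcp hcc h1 hx
    exact ⟨c, hcp, hcc, fun i _ => rfl, hx⟩
  | succ j ih =>
    intro c hcp hcc hj2 hx
    by_cases hxj : x ∈ c (j + 1)
    · obtain ⟨c', h1, h2, h3, h4⟩ := ih c hcp hcc (by omega) hxj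
      exact ⟨c', h1, h2, fun i hi => h3 i (by omega), h4⟩
    · -- replace c (j+1) by a minimal prime over c j ⊔ span {x} inside c (j+2)
      haveI hcj2 : (c (j+2)).IsPrime := hcp (j+2) (by omega)
      haveI hcj1 : (c (j+1)).IsPrime := hcp (j+1) (by omega)
      haveI hcj : (c j).IsPrime := hcp j (by omega)
      have hle : c j ⊔ Ideal.span {x} ≤ c (j+2) := by
        refine sup_le ((hcc j (by omega)).le.trans (hcc (j+1) (by omega)).le) ?_
        rw [Ideal.span_le, Set.singleton_subset_iff]; exact hx
      obtain ⟨p', hp'min, hp'le⟩ := Ideal.exists_minimalPrimes_le hle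
      have hp'prime : p'.IsPrime := hp'min.1.1
      have hxp' : x ∈ p' := hp'min.1.2
        (Submodule.mem_sup_right (Ideal.mem_span_singleton_self x))
      have hlow : c j < p' := by
        refine lt_of_le_of_ne (le_sup_left.trans hp'min.1.2) fun hEq => ?_
        exact hxj ((hcc j (by omega)).le (hEq ▸ hxp'))
      have hhigh : p' < c (j+2) := by
        refine lt_of_le_of_ne hp'le fun hEq => ?_
        -- pit in B ⧸ c j
        set D := B ⧸ c j with hD
        set mkD := Ideal.Quotient.mk (c j) with hmkD
        have hsurj : Function.Surjective mkD := Ideal.Quotient.mk_surjective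
        have hker : RingHom.ker mkD = c j := Ideal.mk_ker
        haveI : IsDomain D := Ideal.Quotient.isDomain (c j)
        have hbotp : (⊥ : Ideal D).IsPrime := Ideal.bot_prime
        have hmap1 : (Ideal.map mkD (c (j+1))).IsPrime :=
          Ideal.map_isPrime_of_surjective hsurj (by rw [hker]; exact (hcc j (by omega)).le)
        have hmap2 : (Ideal.map mkD (c (j+2))).IsPrime :=
          Ideal.map_isPrime_of_surjective hsurj
            (by rw [hker]; exact ((hcc j (by omega)).le.trans (hcc (j+1) (by omega)).le))
        have hcomap1 : Ideal.comap mkD (Ideal.map mkD (c (j+1))) = c (j+1) := by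
          rw [Ideal.comap_map_of_surjective _ hsurj, ← RingHom.ker_eq_comap_bot, hker]
          exact sup_eq_left.mpr (hcc j (by omega)).le
        have hcomap2 : Ideal.comap mkD (Ideal.map mkD (c (j+2))) = c (j+2) := by
          rw [Ideal.comap_map_of_surjective _ hsurj, ← RingHom.ker_eq_comap_bot, hker]
          exact sup_eq_left.mpr ((hcc j (by omega)).le.trans (hcc (j+1) (by omega)).le)
        have hq2 : Ideal.map mkD (c (j+2)) ∈ (Ideal.span {mkD x}).minimalPrimes := by
          constructor
          · refine ⟨hmap2, ?_⟩
            rw [Ideal.span_le, Set.singleton_subset_iff]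
            exact Ideal.mem_map_of_mem mkD hx
          · rintro J ⟨hJ, hJx⟩ hJle
            have h1 : (Ideal.comap mkD J).IsPrime := hJ.comap mkD
            have h2 : c j ⊔ Ideal.span {x} ≤ Ideal.comap mkD J := by
              refine sup_le ?_ ?_
              · intro y hy
                rw [Ideal.mem_comap, Ideal.Quotient.eq_zero_iff_mem.mpr hy]
                exact J.zero_mem
              · rw [Ideal.span_le, Set.singleton_subset_iff, SetLike.mem_coe, Ideal.mem_comap]
                exact hJx (Ideal.mem_span_singleton_self (mkD x))
            have h3 : Ideal.comap mkD J ≤ c (j+2) := by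
              calc Ideal.comap mkD J ≤ Ideal.comap mkD (Ideal.map mkD (c (j+2))) :=
                    Ideal.comap_mono hJle
                _ = c (j+2) := hcomap2
            have h4 : c (j+2) ≤ Ideal.comap mkD J := by
              have := hp'min.2 ⟨h1, h2⟩ (hEq ▸ h3)
              rwa [hEq] at this
            calc Ideal.map mkD (c (j+2)) ≤ Ideal.map mkD (Ideal.comap mkD J) :=
                  Ideal.map_mono h4
              _ = J := Ideal.map_comap_of_surjective _ hsurj J
        refine pit (mkD x) _ hq2 ⊥ (Ideal.map mkD (c (j+1))) hbotp hmap1 ?_ ?_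
        · refine bot_lt_iff_ne_bot.mpr fun hbot => ?_
          have : c (j+1) ≤ c j := by
            intro y hy
            have : mkD y ∈ Ideal.map mkD (c (j+1)) := Ideal.mem_map_of_mem _ hy
            rw [hbot, Ideal.mem_bot] at this
            rw [← hker]; exact this
          exact (hcc j (by omega)).not_ge this
        · refine lt_of_le_of_ne (Ideal.map_mono (hcc (j+1) (by omega)).le) fun hEq2 => ?_
          have := congrArg (Ideal.comap mkD) hEq2
          rw [hcomap1, hcomap2] at this
          exact (hcc (j+1) (by omega)).ne this
      -- the modified chain
      classical
      have hc''p : ∀ i ≤ h, ((fun i => if i = j + 1 then p' else c i) i).IsPrime := by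
        intro i hi
        show (if i = j + 1 then p' else c i).IsPrime
        by_cases hij : i = j + 1
        · rw [if_pos hij]; exact hp'prime
        · rw [if_neg hij]; exact hcp i hi
      have hc''c : ∀ i, i < h →
          (fun i => if i = j + 1 then p' else c i) i
            < (fun i => if i = j + 1 then p' else c i) (i+1) := by
        intro i hiH
        show (if i = j + 1 then p' else c i) < (if i + 1 = j + 1 then p' else c (i+1))
        rcases eq_or_ne i (j+1) with rfl | hij
        · rw [if_pos rfl, if_neg (by omega)]
          exact hhigh
        · rcases eq_or_ne (i+1) (j+1) with hi1 | hi1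
          · rw [if_neg hij, if_pos hi1]
            have : i = j := by omega
            rw [this]; exact hlow
          · rw [if_neg hij, if_neg hi1]; exact hcc i hiH
      have hx'' : x ∈ (fun i => if i = j + 1 then p' else c i) (j+1) := by
        show x ∈ (if j + 1 = j + 1 then p' else c (j+1))
        rw [if_pos rfl]; exact hxp'
      obtain ⟨c', h1, h2, h3, h4⟩ := ih _ hc''p hc''c (by omega) hx''
      refine ⟨c', h1, h2, fun i hi => ?_, h4⟩
      rw [h3 i (by omega)]
      show (if i = j + 1 then p' else c i) = c i
      rw [if_neg (by omega)]

/-- Krull height theorem, chain form. -/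
lemma kht_aux : ∀ (n : ℕ) (B : Type u) [CommRing B] [IsNoetherianRing B] (t : Finset B),
    t.card ≤ n → ∀ (q : Ideal B), q.IsPrime → q ∈ (Ideal.span (t : Set B)).minimalPrimes →
    ∀ (h : ℕ) (c : ℕ → Ideal B), (∀ i ≤ h, (c i).IsPrime) → (∀ i, i < h → c i < c (i+1)) →
    c h = q → h ≤ n := by
  intro n
  induction n with
  | zero =>
    intro B _ _ t hcard q hq hmin h c hcp hcc htop
    by_contra hcon
    have hh : 1 ≤ h := by omega
    have ht : t = ∅ := Finset.card_eq_zero.mp (by omega)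
    have hlt : c (h-1) < q := by
      have := hcc (h-1) (by omega)
      rwa [show h - 1 + 1 = h by omega, htop] at this
    have : q ≤ c (h-1) := hmin.2 ⟨hcp (h-1) (by omega), by
      rw [ht]; simp⟩ hlt.le
    exact hlt.not_ge this
  | succ n ihn =>
    intro B _ _ t hcard q hq hmin h c hcp hcc htop
    rcases Nat.eq_zero_or_pos h with rfl | hh
    · omega
    -- find a generator not in c (h-1)
    have hlt : c (h-1) < q := by
      have := hcc (h-1) (by omega)
      rwa [show h - 1 + 1 = h by omega, htop] at this
    obtain ⟨x, hxt, hxc⟩ : ∃ x ∈ t, x ∉ c (h-1) := by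
      by_contra hcon
      push_neg at hcon
      have hle : Ideal.span (t : Set B) ≤ c (h-1) := by
        rw [Ideal.span_le]; intro y hy; exact hcon y hy
      exact hlt.not_ge (hmin.2 ⟨hcp (h-1) (by omega), hle⟩ hlt.le)
    have hxq : x ∈ c h := by
      rw [htop]
      exact hmin.1.2 (Ideal.subset_span hxt)
    -- modify the chain so that x ∈ c' 1
    obtain ⟨c', hcp', hcc', heq', hx1⟩ := chain_modify h x (h-1) c hcp hcc (by omega)
      (by rwa [show h - 1 + 1 = h by omega])
    have htop' : c' h = q := by rw [heq' h (by omega), htop]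
    -- monotonicity of the chain
    have hmono : ∀ a b, a ≤ b → b ≤ h → c' a ≤ c' b := by
      intro a b hab hbh
      induction b with
      | zero => rw [Nat.le_zero.mp hab]
      | succ b ih =>
        rcases Nat.lt_or_ge a (b+1) with hab' | hab'
        · exact (ih (by omega) (by omega)).trans (hcc' b (by omega)).le
        · rw [show a = b + 1 by omega]
    -- pass to the quotient
    classical
    set mkD := Ideal.Quotient.mk (c' 1) with hmkD
    have hsurj : Function.Surjective mkD := Ideal.Quotient.mk_surjective
    have hker : RingHom.ker mkD = c' 1 := Ideal.mk_ker
    set t' : Finset (B ⧸ c' 1) := (t.erase x).image mkD with ht'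
    have hcard' : t'.card ≤ n := by
      calc t'.card ≤ (t.erase x).card := Finset.card_image_le
        _ = t.card - 1 := Finset.card_erase_of_mem hxt
        _ ≤ n := by omega
    have hketo : ∀ i, 1 ≤ i → i ≤ h → RingHom.ker mkD ≤ c' i := by
      intro i h1 h2; rw [hker]; exact hmono 1 i h1 h2
    haveI := hcp' h le_rfl
    have hqD : (Ideal.map mkD q).IsPrime := by
      rw [← htop']
      exact Ideal.map_isPrime_of_surjective hsurj (hketo h (by omega) le_rfl)
    have hcomap : ∀ i, 1 ≤ i → i ≤ h → Ideal.comap mkD (Ideal.map mkD (c' i)) = c' i := by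
      intro i h1 h2
      rw [Ideal.comap_map_of_surjective _ hsurj, ← RingHom.ker_eq_comap_bot, hker]
      exact sup_eq_left.mpr (hmono 1 i h1 h2)
    -- minimality of map mkD q over span t'
    have hminD : Ideal.map mkD q ∈ (Ideal.span (t' : Set (B ⧸ c' 1))).minimalPrimes := by
      constructor
      · refine ⟨hqD, ?_⟩
        rw [ht', Finset.coe_image, Ideal.span_le]
        rintro _ ⟨z, hz, rfl⟩
        exact Ideal.mem_map_of_mem mkD (hmin.1.2 (Ideal.subset_span (Finset.mem_of_mem_erase hz)))
      · rintro J ⟨hJ, hJt⟩ hJle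
        have h1 : (Ideal.comap mkD J).IsPrime := hJ.comap mkD
        have h2 : Ideal.span (t : Set B) ≤ Ideal.comap mkD J := by
          rw [Ideal.span_le]
          intro y hy
          rw [SetLike.mem_coe, Ideal.mem_comap]
          rcases eq_or_ne y x with rfl | hyx
          · have : mkD y = 0 := Ideal.Quotient.eq_zero_iff_mem.mpr hx1
            rw [this]; exact J.zero_mem
          · refine hJt (Ideal.subset_span ?_)
            rw [ht', Finset.coe_image]
            exact ⟨y, Finset.mem_erase.mpr ⟨hyx, hy⟩, rfl⟩
        have h3 : Ideal.comap mkD J ≤ q := by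
          calc Ideal.comap mkD J ≤ Ideal.comap mkD (Ideal.map mkD q) := Ideal.comap_mono hJle
            _ = q := by rw [← htop']; exact hcomap h (by omega) le_rfl
        have h4 : q ≤ Ideal.comap mkD J := hmin.2 ⟨h1, h2⟩ h3
        calc Ideal.map mkD q ≤ Ideal.map mkD (Ideal.comap mkD J) := Ideal.map_mono h4
          _ = J := Ideal.map_comap_of_surjective _ hsurj J
    -- the quotient chain
    have hfin : h - 1 ≤ n := by
      refine ihn (B ⧸ c' 1) t' hcard' (Ideal.map mkD q) hqD hminD (h-1)
        (fun i => Ideal.map mkD (c' (i+1))) ?_ ?_ ?_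
      · intro i hi
        haveI := hcp' (i+1) (by omega : i + 1 ≤ h)
        exact Ideal.map_isPrime_of_surjective hsurj (hketo (i+1) (by omega) (by omega))
      · intro i hi
        refine lt_of_le_of_ne (Ideal.map_mono (hcc' (i+1) (by omega)).le) fun hEq => ?_
        have := congrArg (Ideal.comap mkD) hEq
        rw [hcomap (i+1) (by omega) (by omega), hcomap (i+2) (by omega) (by omega)] at this
        exact (hcc' (i+1) (by omega)).ne this
      · show Ideal.map mkD (c' (h - 1 + 1)) = Ideal.map mkD q
        rw [show h - 1 + 1 = h by omega, htop']
    omega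

theorem height_le_of_span_finset (R : Type*) [CommRing R] [IsNoetherianRing R]
    (𝔭 : Ideal (MvPolynomial ℕ R)) (hp : 𝔭.IsPrime) (n : ℕ)
    (s : Finset (MvPolynomial ℕ R)) (hcard : s.card = n)
    (hspan : Ideal.span (s : Set (MvPolynomial ℕ R)) = 𝔭) :
    Order.height (⟨𝔭, hp⟩ : PrimeSpectrum (MvPolynomial ℕ R)) ≤ (n : ℕ∞) := by
  classical
  refine Order.height_le fun π hπ => ?_
  rw [Nat.cast_le]
  set h := π.length with hh
  -- the chain of prime ideals of A := MvPolynomial ℕ R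
  set c : ℕ → Ideal (MvPolynomial ℕ R) := fun i => (π.toFun ⟨min i h, by omega⟩).asIdeal with hc
  have hcp : ∀ i, (c i).IsPrime := fun i => (π.toFun _).isPrime
  have hcc : ∀ i, i < h → c i < c (i+1) := by
    intro i hi
    have := π.strictMono (show (⟨min i h, by omega⟩ : Fin (π.length + 1))
      < ⟨min (i+1) h, by omega⟩ by rw [Fin.mk_lt_mk]; omega)
    exact (PrimeSpectrum.asIdeal_lt_asIdeal _ _).mpr this
  have htop : c h = 𝔭 := by
    have : π.toFun ⟨min h h, by omega⟩ = π.last := by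
      rw [RelSeries.last]
      congr 1
      simp [Fin.last, hh]
    rw [hc]
    simp only [this, hπ]
  -- witnesses for the strict inclusions
  have hwit : ∀ i, i < h → ∃ y, y ∈ c (i+1) ∧ y ∉ c i := by
    intro i hi
    obtain ⟨y, hy1, hy2⟩ := SetLike.exists_of_lt (hcc i hi)
    exact ⟨y, hy1, hy2⟩
  set F : ℕ → MvPolynomial ℕ R := fun i => if hi : i < h then (hwit i hi).choose else 0 with hF
  have hF1 : ∀ i, i < h → F i ∈ c (i+1) ∧ F i ∉ c i := by
    intro i hi
    rw [hF]; simp only [dif_pos hi]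
    exact (hwit i hi).choose_spec
  -- the finite set of variables
  set V : Finset ℕ := s.sup MvPolynomial.vars ⊔ (Finset.range h).sup (fun i => (F i).vars)
    with hV
  have hsV : ∀ a ∈ s, (↑a.vars : Set ℕ) ⊆ (↑V : Set ℕ) := by
    intro a ha
    have h1 : a.vars ⊆ V := le_trans (Finset.le_sup ha) le_sup_left
    exact fun v hv => h1 hv
  have hFV : ∀ i, i < h → (↑(F i).vars : Set ℕ) ⊆ (↑V : Set ℕ) := by
    intro i hi
    have h1 : (F i).vars ⊆ V :=
      le_trans (Finset.le_sup (f := fun i => (F i).vars) (Finset.mem_range.mpr hi)) le_sup_right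
    exact fun v hv => h1 hv
  haveI : IsNoetherianRing (MvPolynomial (↥(↑V : Set ℕ)) R) := inferInstance
  have hri : ∀ b : MvPolynomial (↥(↑V : Set ℕ)) R,
      MvPolynomial.aeval
        (fun i => if hi : i ∈ (↑V : Set ℕ) then MvPolynomial.X (⟨i, hi⟩ : ↥(↑V : Set ℕ))
          else (0 : MvPolynomial (↥(↑V : Set ℕ)) R))
        (MvPolynomial.rename (Subtype.val) b) = b := by
    intro b
    rw [MvPolynomial.aeval_rename]
    have heq : ((fun i => if hi : i ∈ (↑V : Set ℕ) then
        MvPolynomial.X (⟨i, hi⟩ : ↥(↑V : Set ℕ)) else (0 : MvPolynomial (↥(↑V : Set ℕ)) R))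
        ∘ (Subtype.val : ↥(↑V : Set ℕ) → ℕ)) = MvPolynomial.X := by
      funext v
      simp only [Function.comp_apply, dif_pos v.2]
    rw [heq, MvPolynomial.aeval_X_left_apply]
  have hrep : ∀ a : MvPolynomial ℕ R, (↑a.vars : Set ℕ) ⊆ (↑V : Set ℕ) →
      ∃ b : MvPolynomial (↥(↑V : Set ℕ)) R, MvPolynomial.rename (Subtype.val) b = a := by
    intro a ha
    have h1 : a ∈ MvPolynomial.supported R (↑V : Set ℕ) := MvPolynomial.mem_supported.mpr ha
    rw [MvPolynomial.supported_eq_range_rename] at h1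
    obtain ⟨b, hb⟩ := h1
    exact ⟨b, hb⟩
  -- the contracted chain
  set inj : MvPolynomial (↥(↑V : Set ℕ)) R →+* MvPolynomial ℕ R :=
    (MvPolynomial.rename (R := R) (Subtype.val : ↥(↑V : Set ℕ) → ℕ)).toRingHom with hinjdef
  have hinj_apply : ∀ b, inj b = MvPolynomial.rename (Subtype.val) b := fun _ => rfl
  set cB : ℕ → Ideal (MvPolynomial (↥(↑V : Set ℕ)) R) := fun i => Ideal.comap inj (c i)
    with hcB
  have hcBp : ∀ i, (cB i).IsPrime := fun i => (hcp i).comap inj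
  have hcBc : ∀ i, i < h → cB i < cB (i+1) := by
    intro i hi
    refine lt_of_le_of_ne (Ideal.comap_mono (hcc i hi).le) fun hEq => ?_
    obtain ⟨b, hb⟩ := hrep (F i) (hFV i hi)
    have hmem : b ∈ cB (i+1) := by
      rw [hcB]
      show inj b ∈ c (i+1)
      rw [hinj_apply, hb]
      exact (hF1 i hi).1
    rw [← hEq] at hmem
    exact (hF1 i hi).2 (by rwa [hcB, Ideal.mem_comap, hinj_apply, hb] at hmem)
  -- the generating set downstairs
  have hrepS : ∀ a : {y // y ∈ s}, ∃ b : MvPolynomial (↥(↑V : Set ℕ)) R,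
      MvPolynomial.rename (Subtype.val) b = (a : MvPolynomial ℕ R) :=
    fun a => hrep a (hsV a a.2)
  set t : Finset (MvPolynomial (↥(↑V : Set ℕ)) R) :=
    s.attach.image (fun a => (hrepS a).choose) with ht
  have hcardt : t.card ≤ n := by
    calc t.card ≤ s.attach.card := Finset.card_image_le
      _ = s.card := Finset.card_attach
      _ = n := hcard
  -- cB h = span t
  have hspanB : cB h = Ideal.span (t : Set (MvPolynomial (↥(↑V : Set ℕ)) R)) := by
    apply le_antisymm
    · intro g hg
      have hg' : inj g ∈ 𝔭 := by rwa [hcB, Ideal.mem_comap, htop] at hg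
      rw [← hspan] at hg'
      have hmap : MvPolynomial.aeval
          (fun i => if hi : i ∈ (↑V : Set ℕ) then MvPolynomial.X (⟨i, hi⟩ : ↥(↑V : Set ℕ))
            else (0 : MvPolynomial (↥(↑V : Set ℕ)) R)) (inj g)
          ∈ Ideal.map (MvPolynomial.aeval
            (fun i => if hi : i ∈ (↑V : Set ℕ) then MvPolynomial.X (⟨i, hi⟩ : ↥(↑V : Set ℕ))
              else (0 : MvPolynomial (↥(↑V : Set ℕ)) R)) :
            MvPolynomial ℕ R →ₐ[R] MvPolynomial (↥(↑V : Set ℕ)) R).toRingHom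
            (Ideal.span (s : Set (MvPolynomial ℕ R))) :=
        Ideal.mem_map_of_mem _ hg'
      rw [hinj_apply, hri g] at hmap
      rw [Ideal.map_span] at hmap
      refine Ideal.span_le.mpr ?_ hmap
      rintro _ ⟨a, ha, rfl⟩
      have hat : (⟨a, ha⟩ : {y // y ∈ s}) ∈ s.attach := Finset.mem_attach _ _
      have hchoose : MvPolynomial.rename (Subtype.val) ((hrepS ⟨a, ha⟩).choose) = a :=
        (hrepS ⟨a, ha⟩).choose_spec
      have hmemt : (hrepS ⟨a, ha⟩).choose ∈ t := Finset.mem_image_of_mem _ hat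
      refine Ideal.subset_span ?_
      show (MvPolynomial.aeval
          (fun i => if hi : i ∈ (↑V : Set ℕ) then MvPolynomial.X (⟨i, hi⟩ : ↥(↑V : Set ℕ))
            else (0 : MvPolynomial (↥(↑V : Set ℕ)) R))) a ∈ (t : Set _)
      rw [← hchoose, hri]
      exact hmemt
    · rw [Ideal.span_le]
      rintro b hb
      rw [Finset.mem_coe, ht] at hb
      obtain ⟨a, _, rfl⟩ := Finset.mem_image.mp hb
      rw [SetLike.mem_coe, hcB, Ideal.mem_comap, hinj_apply, (hrepS a).choose_spec, htop,
        ← hspan]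
      exact Ideal.subset_span a.2
  -- minimality
  have hminB : cB h ∈ (Ideal.span (t : Set (MvPolynomial (↥(↑V : Set ℕ)) R))).minimalPrimes := by
    constructor
    · exact ⟨hcBp h, hspanB.ge⟩
    · intro J hJ _
      rw [hspanB]
      exact hJ.2
  exact kht_aux n (MvPolynomial (↥(↑V : Set ℕ)) R) t hcardt (cB h) (hcBp h) hminB h cB
    (fun i _ => hcBp i) hcBc rfl
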